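/- Let k ≥ 1 be an integer and let R = ℂ⟦X,Y⟧ be the formal power series ring in two variables over ℂ. Then Ideal.span {2√2·X + 4·X³, √2·(k+1)·Y^k + (2k+2)·Y^{2k+1}} = Ideal.span {X, Y^k}, and the quotient ℂ-vector space R / Ideal.span {X, Y^k} has dimension k. -/

import Mathlib

open MvPowerSeries Finsupp

noncomputable section

namespace Stmt11Aux

abbrev R := MvPowerSeries (Fin 2) ℂ

lemma coeff_single_mem {k : ℕ} {f : R}
    (hf : f ∈ Ideal.span {(X 0 : R), (X 1) ^ k}) {i : ℕ} (hi : i < k) :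
    coeff (single 1 i) f = 0 := by
  obtain ⟨p, q, rfl⟩ := Ideal.mem_span_pair.mp hf
  rw [map_add, X_def, X_pow_eq, coeff_mul_monomial, coeff_mul_monomial]
  rw [if_neg, if_neg, add_zero]
  · rw [single_le_iff, single_apply]
    simp [hi.not_ge]
  · rw [single_le_iff]
    simp

lemma mem_of_coeff {k : ℕ} {f : R}
    (hf : ∀ i < k, coeff (single 1 i) f = 0) :
    f ∈ Ideal.span {(X 0 : R), (X 1) ^ k} := by
  classical
  set g : R := fun m : Fin 2 →₀ ℕ => f (m + single 0 1) with hg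
  set h : R := fun m : Fin 2 →₀ ℕ =>
    if (m + single 1 k : Fin 2 →₀ ℕ) 0 = 0 then f (m + single 1 k) else 0 with hh
  have key : f = X 0 * g + (X 1) ^ k * h := by
    ext m
    rw [map_add, X_def, X_pow_eq, coeff_monomial_mul, coeff_monomial_mul, coeff_apply]
    by_cases h0 : (1 : ℕ) ≤ m 0
    · have hle : single (0 : Fin 2) 1 ≤ m := single_le_iff.mpr h0
      rw [if_pos hle, one_mul]
      have hgm : coeff (m - single 0 1) g = f m := by
        rw [coeff_apply, hg]; simp only []
        rw [tsub_add_cancel_of_le hle]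
      rw [hgm]
      by_cases h1 : single (1 : Fin 2) k ≤ m
      · rw [if_pos h1, one_mul]
        have hhm : coeff (m - single 1 k) h = 0 := by
          rw [coeff_apply, hh]; simp only []
          rw [tsub_add_cancel_of_le h1, if_neg (by omega)]
        rw [hhm, add_zero]
      · rw [if_neg h1, add_zero]
    · push_neg at h0
      have hm0 : m 0 = 0 := by omega
      rw [if_neg (by rw [single_le_iff]; omega), zero_add]
      by_cases h1 : single (1 : Fin 2) k ≤ m
      · rw [if_pos h1, one_mul, coeff_apply, hh]
        simp only []
        rw [tsub_add_cancel_of_le h1, if_pos hm0]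
      · rw [if_neg h1]
        have hmeq : m = single (1 : Fin 2) (m 1) := by
          ext j
          fin_cases j
          · simpa [single_apply] using hm0
          · simp [single_apply]
        have hlt : m 1 < k := by
          rw [hmeq, single_le_iff, single_apply] at h1
          simp only [if_true, ite_true, reduceIte] at h1
          omega
        have h2 := hf (m 1) hlt
        rw [coeff_apply] at h2
        rw [← hmeq] at h2
        rw [h2]
  rw [key]
  exact Ideal.mem_span_pair.mpr ⟨g, h, by ring⟩

lemma coeff_single_pow (i j : ℕ) :
    coeff (single 1 i) ((X 1 : R) ^ j) = if j = i then 1 else 0 := by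
  rw [X_pow_eq, coeff_monomial]
  by_cases hij : j = i
  · subst hij; simp
  · rw [if_neg (fun hc => hij ((Finsupp.single_injective (1 : Fin 2)) hc).symm), if_neg hij]

lemma span_pair_unit_mul {A : Type*} [CommRing A] {u v x y : A}
    (hu : IsUnit u) (hv : IsUnit v) :
    Ideal.span {u * x, v * y} = Ideal.span {x, y} := by
  apply le_antisymm
  · rw [Ideal.span_le]
    rintro z hz
    simp only [Set.mem_insert_iff, Set.mem_singleton_iff] at hz
    rcases hz with rfl | rfl
    · exact Ideal.mul_mem_left _ _ (Ideal.subset_span (by simp))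
    · exact Ideal.mul_mem_left _ _ (Ideal.subset_span (by simp))
  · rw [Ideal.span_le]
    rintro z hz
    simp only [Set.mem_insert_iff, Set.mem_singleton_iff] at hz
    obtain ⟨w, rfl⟩ := hu
    obtain ⟨w', rfl⟩ := hv
    rcases hz with rfl | rfl
    · rw [show (z : A) = ↑w⁻¹ * (↑w * z) by rw [← mul_assoc, Units.inv_mul, one_mul]]
      exact Ideal.mul_mem_left _ _ (Ideal.subset_span (by simp))
    · rw [show (z : A) = ↑w'⁻¹ * (↑w' * z) by rw [← mul_assoc, Units.inv_mul, one_mul]]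
      exact Ideal.mul_mem_left _ _ (Ideal.subset_span (by simp))

end Stmt11Aux

open Stmt11Aux in
theorem stmt11 (k : ℕ) (hk : 1 ≤ k) :
    Ideal.span
      {(C (σ := Fin 2) (R := ℂ) ((2 * Real.sqrt 2 : ℝ) : ℂ)) * X 0 + (C (σ := Fin 2) (R := ℂ) 4) * (X 0) ^ 3,
       (C (σ := Fin 2) (R := ℂ) ((Real.sqrt 2 * (k + 1) : ℝ) : ℂ)) * (X 1) ^ k
         + (C (σ := Fin 2) (R := ℂ) ((2 * k + 2 : ℕ) : ℂ)) * (X 1) ^ (2 * k + 1)} =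
      Ideal.span {(X 0 : MvPowerSeries (Fin 2) ℂ), (X 1) ^ k} ∧
    Module.finrank ℂ
      (MvPowerSeries (Fin 2) ℂ ⧸
        Ideal.span {(X 0 : MvPowerSeries (Fin 2) ℂ), (X 1) ^ k}) = k := by
  constructor
  · -- ideal equality
    set u1 : R := C (σ := Fin 2) (R := ℂ) ((2 * Real.sqrt 2 : ℝ) : ℂ) + C (σ := Fin 2) (R := ℂ) 4 * (X 0) ^ 2 with hu1def
    set u2 : R := C (σ := Fin 2) (R := ℂ) ((Real.sqrt 2 * (k + 1) : ℝ) : ℂ)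
      + C (σ := Fin 2) (R := ℂ) ((2 * k + 2 : ℕ) : ℂ) * (X 1) ^ (k + 1) with hu2def
    have hs2 : Real.sqrt 2 ≠ 0 := by positivity
    have hu1 : IsUnit u1 := by
      rw [MvPowerSeries.isUnit_iff_constantCoeff]
      have : constantCoeff u1 = ((2 * Real.sqrt 2 : ℝ) : ℂ) := by
        simp [hu1def, constantCoeff_X]
      rw [this]
      simp only [isUnit_iff_ne_zero, ne_eq, Complex.ofReal_eq_zero]
      positivity
    have hu2 : IsUnit u2 := by
      rw [MvPowerSeries.isUnit_iff_constantCoeff]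
      have : constantCoeff u2 = ((Real.sqrt 2 * (k + 1) : ℝ) : ℂ) := by
        simp [hu2def, constantCoeff_X]
      rw [this]
      simp only [isUnit_iff_ne_zero, ne_eq, Complex.ofReal_eq_zero]
      positivity
    have e1 : (C (σ := Fin 2) (R := ℂ) ((2 * Real.sqrt 2 : ℝ) : ℂ)) * X 0 + (C (σ := Fin 2) (R := ℂ) 4) * (X 0) ^ 3
        = u1 * X 0 := by rw [hu1def]; ring
    have e2 : (C (σ := Fin 2) (R := ℂ) ((Real.sqrt 2 * (k + 1) : ℝ) : ℂ)) * (X 1) ^ k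
         + (C (σ := Fin 2) (R := ℂ) ((2 * k + 2 : ℕ) : ℂ)) * (X 1) ^ (2 * k + 1)
        = u2 * (X 1) ^ k := by
      rw [hu2def, show 2 * k + 1 = (k + 1) + k from by ring, pow_add]; ring
    rw [e1, e2]
    exact span_pair_unit_mul hu1 hu2
  · -- finrank
    set I : Ideal R := Ideal.span {(X 0 : R), (X 1) ^ k} with hI
    let L : (Fin k → ℂ) →ₗ[ℂ] R :=
      ∑ i : Fin k, (LinearMap.proj i).smulRight ((X 1 : R) ^ (i : ℕ))
    have hLc : ∀ (c : Fin k → ℂ) (i : Fin k), coeff (single 1 (i : ℕ)) (L c) = c i := by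
      intro c i
      simp only [L, LinearMap.sum_apply, LinearMap.smulRight_apply, LinearMap.proj_apply,
        map_sum, map_smul]
      have : ∀ j : Fin k, coeff (single 1 (i : ℕ)) ((X 1 : R) ^ (j : ℕ))
          = if j = i then 1 else 0 := by
        intro j
        rw [coeff_single_pow]
        simp [Fin.val_eq_val]
      simp only [this, smul_eq_mul, mul_ite, mul_one, mul_zero]
      simp
    let ψ : (Fin k → ℂ) →ₗ[ℂ] (R ⧸ I) := (Ideal.Quotient.mkₐ ℂ I).toLinearMap ∘ₗ L
    have hinj : Function.Injective ψ := by
      rw [injective_iff_map_eq_zero]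
      intro c hc
      have hmem : L c ∈ I := by
        rwa [← Ideal.Quotient.eq_zero_iff_mem]
      funext i
      have := coeff_single_mem (k := k) hmem i.2
      rw [hLc c i] at this
      exact this
    have hsurj : Function.Surjective ψ := by
      intro q
      obtain ⟨f, rfl⟩ := Ideal.Quotient.mk_surjective q
      refine ⟨fun i => coeff (single 1 (i : ℕ)) f, ?_⟩
      show Ideal.Quotient.mk I (L _) = Ideal.Quotient.mk I f
      rw [Ideal.Quotient.mk_eq_mk_iff_sub_mem]
      apply mem_of_coeff
      intro i hi
      rw [map_sub, hLc _ ⟨i, hi⟩]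
      simp
    let e := LinearEquiv.ofBijective ψ ⟨hinj, hsurj⟩
    rw [← e.finrank_eq]
    exact Module.finrank_fin_fun ℂ

end
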